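/- Let a ∈ F_q be such that both 2a + 2 and 2a - 2 are squares in F_q. Then for every k ≥ 0, the element b = C_k(a) (the evaluation at a of the image in F_q[x] of the k-th Chebyshev polynomial) also satisfies that 2b + 2 and 2b - 2 are squares in F_q. -/
import Mathlib


/-- The Chebyshev polynomials of the first kind: `C 0 = 1`, `C 1 = X`,
`C (k+2) = 2X * C (k+1) - C k`. -/
noncomputable def cheb : ℕ → Polynomial ℤ
  | 0 => 1
  | 1 => Polynomial.X
  | (k + 2) => 2 * Polynomial.X * cheb (k + 1) - cheb k

/-- If `a ∈ F_q` is such that `2a + 2` and `2a - 2` are both squares in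
`F_q`, then for every `k ≥ 0` the element `b = C_k(a)` also satisfies that `2b + 2` and
`2b - 2` are squares in `F_q`. -/
theorem chebyshev_preserves {F : Type*} [Field F] [Fintype F]
    (hq : Odd (Fintype.card F)) (a : F)
    (h1 : IsSquare (2 * a + 2)) (h2 : IsSquare (2 * a - 2)) (k : ℕ) :
    IsSquare (2 * Polynomial.eval a ((cheb k).map (Int.castRingHom F)) + 2) ∧
      IsSquare (2 * Polynomial.eval a ((cheb k).map (Int.castRingHom F)) - 2) := by
  have hchar : ringChar F ≠ 2 := by
    intro h
    have h' := FiniteField.even_card_of_char_two h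
    rw [Nat.odd_iff] at hq
    omega
  have h2ne : (2 : F) ≠ 0 := Ring.two_ne_zero hchar
  obtain ⟨s, hs⟩ := h1
  obtain ⟨t, ht⟩ := h2
  obtain ⟨v, hv2⟩ : ∃ v : F, 2 * v = s + t := ⟨(s + t) / 2, by field_simp⟩
  obtain ⟨u, hud⟩ : ∃ u : F, u = v * v := ⟨_, rfl⟩
  have h4u : 4 * u = (s + t) * (s + t) := by
    linear_combination 4 * hud + (2 * v + s + t) * hv2
  have hu2 : 2 * u = 2 * a + s * t := by
    apply mul_left_cancel₀ h2ne
    linear_combination h4u - hs - ht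
  have hu1 : u * (2 * a - s * t) = 2 := by
    apply mul_left_cancel₀ h2ne
    linear_combination (2 * a - s * t) * hu2 + t ^ 2 * hs + (2 * a + 2) * ht
  have hu0 : u ≠ 0 := left_ne_zero_of_mul (by rw [hu1]; exact h2ne)
  have hv0 : v ≠ 0 := fun h => hu0 (by rw [hud, h, mul_zero])
  have h2i : 2 * a - s * t = u⁻¹ * 2 := by
    have h := congrArg (u⁻¹ * ·) hu1
    simpa [← mul_assoc, inv_mul_cancel₀ hu0] using h
  have h2a : u + u⁻¹ = 2 * a := by
    apply mul_left_cancel₀ h2ne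
    linear_combination hu2 - h2i
  have hui : u * u⁻¹ = 1 := mul_inv_cancel₀ hu0
  set E : ℕ → F := fun k => Polynomial.eval a ((cheb k).map (Int.castRingHom F)) with hE
  have hrec : ∀ n, E (n + 2) = 2 * a * E (n + 1) - E n := by
    intro n
    simp [hE, cheb, Polynomial.map_sub, Polynomial.map_mul, Polynomial.map_ofNat]
  have hE0 : E 0 = 1 := by simp [hE, cheb]
  have hE1 : E 1 = a := by simp [hE, cheb]
  have key : ∀ n, 2 * E n = u ^ n + u⁻¹ ^ n := by
    intro n
    induction n using Nat.twoStepInduction with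
    | zero => rw [hE0]; norm_num
    | one => rw [hE1, pow_one, pow_one]; linear_combination -h2a
    | more n ih1 ih2 =>
      rw [hrec n]
      linear_combination 2*a*ih2 - ih1 - (u^(n+1) + u⁻¹^(n+1)) * h2a
        + (u^n + u⁻¹^n) * hui
  have huk : u ^ k = v ^ k * v ^ k := by rw [hud, mul_pow]
  have huik : u⁻¹ ^ k = v⁻¹ ^ k * v⁻¹ ^ k := by
    rw [hud, mul_inv, mul_pow]
  have hvik : v ^ k * v⁻¹ ^ k = 1 := by
    rw [← mul_pow, mul_inv_cancel₀ hv0, one_pow]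
  refine ⟨⟨v ^ k + v⁻¹ ^ k, ?_⟩, ⟨v ^ k - v⁻¹ ^ k, ?_⟩⟩
  · linear_combination key k + huk + huik - 2 * hvik
  · linear_combination key k + huk + huik + 2 * hvik
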